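/- Under the hypotheses of the discrete inequality theorem (g_{n+1} ≤ g_n(1 - h_n·γ_n) + α_n·h_n·g_n² + h_n·β_n with the conditions g_0 ≤ 1/μ_0, α_n ≤ (μ_n/2)(γ_n - (μ_{n+1}-μ_n)/(μ_n h_n)), β_n ≤ (1/(2μ_n))(γ_n - (μ_{n+1}-μ_n)/(μ_n h_n)), μ_n > 0 increasing), if additionally μ_n → ∞ as n → ∞, then g_n → 0 as n → ∞. -/

import Mathlib

theorem stmt_1 (g α β γ h μ : ℕ → ℝ)
    (hg : ∀ n, 0 ≤ g n) (hα : ∀ n, 0 ≤ α n) (hβ : ∀ n, 0 ≤ β n) (hγ : ∀ n, 0 ≤ γ n)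
    (hh : ∀ n, 0 < h n) (hhγ : ∀ n, 0 < h n * γ n ∧ h n * γ n < 1)
    (hrec : ∀ n, g (n + 1) ≤ g n * (1 - h n * γ n) + α n * h n * (g n) ^ 2 + h n * β n)
    (hμpos : ∀ n, 0 < μ n) (hμmono : ∀ n, μ n ≤ μ (n + 1))
    (h0 : g 0 ≤ 1 / μ 0)
    (hαc : ∀ n, α n ≤ (μ n / 2) * (γ n - (μ (n + 1) - μ n) / (μ n * h n)))
    (hβc : ∀ n, β n ≤ (1 / (2 * μ n)) * (γ n - (μ (n + 1) - μ n) / (μ n * h n)))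
    (hμtop : Filter.Tendsto μ Filter.atTop Filter.atTop) :
    Filter.Tendsto g Filter.atTop (nhds 0) := by
  have key : ∀ n, g n ≤ 1 / μ n := by
    intro n
    induction n with
    | zero => exact h0
    | succ n ih =>
      have hμn := hμpos n
      have hμn1 := hμpos (n + 1)
      have hhn := hh n
      have h1 : 0 ≤ 1 - h n * γ n := by linarith [(hhγ n).2]
      have hX : 0 ≤ γ n - (μ (n + 1) - μ n) / (μ n * h n) := by
        have hc : (0:ℝ) < 1 / (2 * μ n) := by positivity
        have h2 := (hβ n).trans (hβc n)
        by_contra hcon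
        push_neg at hcon
        nlinarith [mul_pos hc (neg_pos.mpr hcon)]
      have hg2 : g n ^ 2 ≤ (1 / μ n) ^ 2 := pow_le_pow_left₀ (hg n) ih 2
      have step1 : g (n + 1) ≤ (1 / μ n) * (1 - h n * γ n)
          + ((μ n / 2) * (γ n - (μ (n + 1) - μ n) / (μ n * h n))) * h n * (1 / μ n) ^ 2
          + h n * ((1 / (2 * μ n)) * (γ n - (μ (n + 1) - μ n) / (μ n * h n))) := by
        refine (hrec n).trans (add_le_add (add_le_add ?_ ?_) ?_)
        · exact mul_le_mul_of_nonneg_right ih h1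
        · have hA : α n * h n ≤ ((μ n / 2) * (γ n - (μ (n + 1) - μ n) / (μ n * h n))) * h n :=
            mul_le_mul_of_nonneg_right (hαc n) hhn.le
          exact mul_le_mul hA hg2 (sq_nonneg _) (by positivity)
        · exact mul_le_mul_of_nonneg_left (hβc n) hhn.le
      have heq : (1 / μ n) * (1 - h n * γ n)
          + ((μ n / 2) * (γ n - (μ (n + 1) - μ n) / (μ n * h n))) * h n * (1 / μ n) ^ 2
          + h n * ((1 / (2 * μ n)) * (γ n - (μ (n + 1) - μ n) / (μ n * h n)))
          = 1 / μ n - (μ (n + 1) - μ n) / (μ n) ^ 2 := by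
        field_simp
        ring
      have hfin : 1 / μ n - (μ (n + 1) - μ n) / (μ n) ^ 2 ≤ 1 / μ (n + 1) := by
        rw [div_sub_div _ _ (ne_of_gt hμn) (by positivity), div_le_div_iff₀ (by positivity) hμn1]
        nlinarith [sq_nonneg (μ n - μ (n + 1))]
      calc g (n + 1) ≤ _ := step1
        _ = _ := heq
        _ ≤ 1 / μ (n + 1) := hfin
  have hlim : Filter.Tendsto (fun n => 1 / μ n) Filter.atTop (nhds 0) := by
    simpa [Function.comp_def] using (tendsto_inv_atTop_zero.comp hμtop)
  exact squeeze_zero hg key hlim
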